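/- Let G be a connected weighted graph on n vertices with edge weights in [0,1] and minimal degree at least δn for some δ > 0. Then for any two disjoint sets U, W ⊆ V(G) and any integer k ≥ 1: sup_{v ∈ V(G)∖(U∪W)} P_v(τ_U < k and τ_W < k) ≤ 2k²|U||W|/(δ²n²). In particular, Close_k(U,W) := P_π(τ_U < k and τ_W < k) ≤ 2k²|U||W|/(δ²n²). -/

import Mathlib

open Finset Filter

noncomputable section

variable {V : Type*} [Fintype V] [DecidableEq V]

/-- The degree of a vertex of a weighted graph: the sum of the incident edge weights. -/
def wdeg (w : V → V → ℝ) (v : V) : ℝ := ∑ u, w v u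

/-- The stationary distribution of the random walk on a weighted graph. -/
def statDist (w : V → V → ℝ) (v : V) : ℝ := wdeg w v / ∑ u, wdeg w u

/-- The one-step transition probability of the random walk. -/
def wstep (w : V → V → ℝ) (x y : V) : ℝ := w x y / wdeg w x

/-- The probability that the random walk follows a given path of `k` steps. -/
def pathWeight (w : V → V → ℝ) {k : ℕ} (x : Fin (k + 1) → V) : ℝ :=
  ∏ i : Fin k, wstep w (x i.castSucc) (x i.succ)

open Classical in
/-- The probability that the first `k` steps of the random walk started at `u` satisfy `P`. -/
def prFrom (w : V → V → ℝ) (u : V) (k : ℕ) (P : (Fin (k + 1) → V) → Prop) : ℝ :=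
  ∑ x : Fin (k + 1) → V, if x 0 = u ∧ P x then pathWeight w x else 0

open Classical in
/-- The probability that the first `k` steps of the stationary random walk satisfy `P`. -/
def prStat (w : V → V → ℝ) (k : ℕ) (P : (Fin (k + 1) → V) → Prop) : ℝ :=
  ∑ x : Fin (k + 1) → V, if P x then statDist w (x 0) * pathWeight w x else 0

/-- `Cap_k(A)`: the probability that a stationary random walk hits `A` within `k` steps. -/
def capa (w : V → V → ℝ) (k : ℕ) (A : Set V) : ℝ :=
  prStat w k fun x => ∃ i, x i ∈ A

/-- A weighted graph: symmetric weights in `[0,1]`, no loops. -/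
def IsWeightedGraph (w : V → V → ℝ) : Prop :=
  (∀ x y, w x y = w y x) ∧ (∀ x y, w x y ∈ Set.Icc (0 : ℝ) 1) ∧ (∀ x, w x x = 0)

/-- Connectedness of a weighted graph: the graph of positive-weight edges is connected. -/
def ConnectedGraph (w : V → V → ℝ) : Prop :=
  (SimpleGraph.fromRel fun x y => 0 < w x y).Connected

/-- `G` is a `γ`-expander: `w(U, Uᶜ) ≥ γ|U|(|V|-|U|)` for all `U ⊆ V`. -/
def IsExpander (w : V → V → ℝ) (γ : ℝ) : Prop :=
  ∀ U : Finset V, γ * U.card * ((Fintype.card V : ℝ) - U.card) ≤ ∑ u ∈ U, ∑ v ∈ Uᶜ, w u v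

/-- The transition matrix of the lazy random walk. -/
def lazyStep (w : V → V → ℝ) : Matrix V V ℝ := fun x y =>
  (if x = y then (1 : ℝ) / 2 else 0) + w x y / (2 * wdeg w x)

/-- The mixing time of the lazy random walk. -/
def mixingTime (w : V → V → ℝ) : ℕ :=
  sInf {t : ℕ | ∀ x y, |(lazyStep w ^ t) x y - statDist w y| ≤ 1 / 4}

/-- `P_π(τ_A < τ_B)`: the probability that the stationary walk hits `A` strictly before `B`. -/
def prHitBefore (w : V → V → ℝ) (A B : Set V) : ℝ :=
  ⨆ k : ℕ, prStat w k fun x => ∃ i, x i ∈ A ∧ ∀ j ≤ i, x j ∉ B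

/-- `P_u(τ_A < τ_B)`: the probability that the walk from `u` hits `A` strictly before `B`. -/
def prHitBeforeFrom (w : V → V → ℝ) (u : V) (A B : Set V) : ℝ :=
  ⨆ k : ℕ, prFrom w u k fun x => ∃ i, x i ∈ A ∧ ∀ j ≤ i, x j ∉ B

/-- `P_u(τ_A < τ_B⁺)`: the walk from `u` hits `A` strictly before returning to `B`. -/
def prHitBeforeRet (w : V → V → ℝ) (u : V) (A B : Set V) : ℝ :=
  ⨆ k : ℕ, prFrom w u k fun x => ∃ i, x i ∈ A ∧ ∀ j : Fin (k + 1), 0 < (j : ℕ) → j ≤ i → x j ∉ B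

set_option linter.unusedSectionVars false
set_option linter.unusedVariables false

section Aux

variable (w : V → V → ℝ)

lemma wdeg_nonneg (hw0 : ∀ x y, 0 ≤ w x y) (v : V) : 0 ≤ wdeg w v :=
  Finset.sum_nonneg fun u _ => hw0 v u

lemma wstep_nonneg (hw0 : ∀ x y, 0 ≤ w x y) (x y : V) : 0 ≤ wstep w x y :=
  div_nonneg (hw0 x y) (wdeg_nonneg w hw0 x)

lemma sum_wstep (v : V) (h : wdeg w v ≠ 0) : ∑ y, wstep w v y = 1 := by
  unfold wstep
  rw [← Finset.sum_div]
  exact div_self h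

lemma wstep_le {D : ℝ} (hD : 0 < D) (hw1 : ∀ x y, w x y ≤ 1)
    (hdeg : ∀ v, D ≤ wdeg w v) (x y : V) : wstep w x y ≤ 1 / D :=
  div_le_div₀ (by norm_num) (hw1 x y) hD (hdeg x)

lemma pathWeight_nonneg (hw0 : ∀ x y, 0 ≤ w x y) {k : ℕ} (x : Fin (k+1) → V) :
    0 ≤ pathWeight w x :=
  Finset.prod_nonneg fun i _ => wstep_nonneg w hw0 _ _

lemma pathWeight_cons (v : V) {k : ℕ} (t : Fin (k+1) → V) :
    pathWeight w (Fin.cons v t) = wstep w v (t 0) * pathWeight w t := by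
  unfold pathWeight
  rw [Fin.prod_univ_succ]
  simp [← Fin.succ_castSucc]

lemma prFrom_nonneg (hw0 : ∀ x y, 0 ≤ w x y) (v : V) (k : ℕ) (P : (Fin (k+1) → V) → Prop) :
    0 ≤ prFrom w v k P := by
  classical
  refine Finset.sum_nonneg fun x _ => ?_
  split_ifs
  · exact pathWeight_nonneg w hw0 x
  · exact le_refl 0

lemma prFrom_mono (hw0 : ∀ x y, 0 ≤ w x y) {v : V} {k : ℕ} {P Q : (Fin (k+1) → V) → Prop}
    (h : ∀ x, P x → Q x) : prFrom w v k P ≤ prFrom w v k Q := by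
  classical
  refine Finset.sum_le_sum fun x _ => ?_
  split_ifs with h1 h2
  · exact le_refl _
  · exact absurd ⟨h1.1, h x h1.2⟩ h2
  · exact pathWeight_nonneg w hw0 x
  · exact le_refl _

lemma prFrom_congr {v : V} {k : ℕ} {P Q : (Fin (k+1) → V) → Prop}
    (h : ∀ x, P x ↔ Q x) : prFrom w v k P = prFrom w v k Q := by
  classical
  refine Finset.sum_congr rfl fun x _ => ite_congr ?_ (fun _ => rfl) (fun _ => rfl)
  rw [eq_iff_iff]
  exact and_congr_right fun _ => h x

lemma prFrom_eq_zero {v : V} {k : ℕ} {P : (Fin (k+1) → V) → Prop}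
    (h : ∀ x, ¬ P x) : prFrom w v k P = 0 :=
  Finset.sum_eq_zero fun x _ => if_neg fun hx => h x hx.2

lemma prFrom_succ (v : V) (k : ℕ) (P : (Fin (k+2) → V) → Prop) :
    prFrom w v (k+1) P = ∑ y, wstep w v y * prFrom w y k (fun x => P (Fin.cons v x)) := by
  classical
  unfold prFrom
  rw [← (Fin.consEquiv (fun _ : Fin (k+2) => V)).sum_comp
      (fun x => if x 0 = v ∧ P x then pathWeight w x else 0)]
  rw [Fintype.sum_prod_type]
  have lhs : ∀ a : V, (∑ t : Fin (k+1) → V,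
      if (Fin.consEquiv (fun _ : Fin (k+2) => V)) (a, t) 0 = v ∧
          P ((Fin.consEquiv (fun _ : Fin (k+2) => V)) (a, t)) then
        pathWeight w ((Fin.consEquiv (fun _ : Fin (k+2) => V)) (a, t)) else 0)
      = ∑ t : Fin (k+1) → V,
        if a = v ∧ P (Fin.cons a t) then wstep w a (t 0) * pathWeight w t else 0 := by
    intro a
    refine Finset.sum_congr rfl fun t _ => ?_
    have he : (Fin.consEquiv (fun _ : Fin (k+2) => V)) (a, t) = Fin.cons a t := rfl
    rw [he, pathWeight_cons]
    exact if_congr (by simp) rfl rfl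
  simp only [lhs]
  rw [Finset.sum_eq_single v ?h1 ?h2]
  · simp only [mul_ite, mul_zero, Finset.mul_sum]
    rw [Finset.sum_comm]
    refine Finset.sum_congr rfl fun t _ => ?_
    have : ∀ y, (if t 0 = y ∧ P (Fin.cons v t) then wstep w v y * pathWeight w t else 0)
        = if t 0 = y then (if P (Fin.cons v t) then wstep w v (t 0) * pathWeight w t else 0) else 0 := by
      intro y
      by_cases h1 : t 0 = y
      · subst h1; simp
      · simp [h1]
    simp only [this]
    rw [Finset.sum_ite_eq]
    simp
  · intro b _ hb
    exact Finset.sum_eq_zero fun t _ => if_neg fun hx => hb hx.1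
  · intro h; exact absurd (Finset.mem_univ v) h

lemma prFrom_true (hpos : ∀ v, wdeg w v ≠ 0) : ∀ (k : ℕ) (v : V),
    prFrom w v k (fun _ => True) = 1 := by
  intro k
  induction k with
  | zero =>
    intro v
    unfold prFrom pathWeight
    simp only [and_true]
    rw [← (Equiv.funUnique (Fin 1) V).symm.sum_comp
      (fun x : Fin 1 → V => if x 0 = v then (∏ i : Fin 0, wstep w (x i.castSucc) (x i.succ)) else 0)]
    simp [Equiv.funUnique]
  | succ k ih =>
    intro v
    rw [prFrom_succ]
    simp only [ih]
    simp only [mul_one]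
    exact sum_wstep w v (hpos v)

lemma prFrom_le_one (hw0 : ∀ x y, 0 ≤ w x y) (hpos : ∀ v, wdeg w v ≠ 0)
    (v : V) (k : ℕ) (P : (Fin (k+1) → V) → Prop) : prFrom w v k P ≤ 1 := by
  calc prFrom w v k P ≤ prFrom w v k (fun _ => True) := prFrom_mono w hw0 fun x _ => trivial
  _ = 1 := prFrom_true w hpos k v

lemma prFrom_zero_and (v a : V) (k : ℕ) (Q : (Fin (k+1) → V) → Prop) :
    prFrom w v k (fun x => x 0 = a ∧ Q x) = if v = a then prFrom w v k Q else 0 := by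
  classical
  by_cases hva : v = a
  · subst hva
    rw [if_pos rfl]
    refine Finset.sum_congr rfl fun x _ => ite_congr ?_ (fun _ => rfl) (fun _ => rfl)
    rw [eq_iff_iff]
    exact and_self_left
  · rw [if_neg hva]
    exact Finset.sum_eq_zero fun x _ => if_neg (by rintro ⟨h1, h2, -⟩; exact hva (h1.symm.trans h2))

lemma hit_one {D : ℝ} (hD : 0 < D) (hw0 : ∀ x y, 0 ≤ w x y) (hw1 : ∀ x y, w x y ≤ 1)
    (hdeg : ∀ v, D ≤ wdeg w v) :
    ∀ (k : ℕ) (i : Fin (k+1)), 1 ≤ (i : ℕ) → ∀ (v a : V),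
      prFrom w v k (fun x => x i = a) ≤ 1 / D := by
  have hpos : ∀ v, wdeg w v ≠ 0 := fun v => ne_of_gt (lt_of_lt_of_le hD (hdeg v))
  intro k
  induction k with
  | zero =>
    intro i hi
    have := i.isLt
    omega
  | succ k ih =>
    intro i hi v a
    obtain ⟨m, hm⟩ : ∃ m : ℕ, (i : ℕ) = m + 1 := ⟨(i : ℕ) - 1, by omega⟩
    have hmlt : m < k + 1 := by have := i.isLt; omega
    have hii : i = Fin.succ ⟨m, hmlt⟩ := by
      apply Fin.ext; simp [hm]
    rw [prFrom_succ]
    have hev : ∀ y : V, prFrom w y k (fun x => (Fin.cons (α := fun _ => V) v x) i = a)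
        = prFrom w y k (fun x => x ⟨m, hmlt⟩ = a) := by
      intro y
      refine prFrom_congr w fun x => ?_
      rw [hii, Fin.cons_succ]
    simp only [hev]
    by_cases hm0 : m = 0
    · subst hm0
      have hz : ∀ y : V, prFrom w y k (fun x => x ⟨0, hmlt⟩ = a) = if y = a then 1 else 0 := by
        intro y
        have : (⟨0, hmlt⟩ : Fin (k+1)) = 0 := rfl
        rw [this]
        have := prFrom_zero_and w y a k (fun _ => True)
        simp only [and_true] at this
        rw [this]
        by_cases hya : y = a <;> simp [hya, prFrom_true w hpos]
      simp only [hz]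
      simp only [mul_ite, mul_one, mul_zero]
      rw [Finset.sum_ite_eq' Finset.univ a (fun y => wstep w v y)]
      simp only [Finset.mem_univ, if_pos]
      exact wstep_le w hD hw1 hdeg v a
    · have h1 : 1 ≤ m := by omega
      calc ∑ y, wstep w v y * prFrom w y k (fun x => x ⟨m, hmlt⟩ = a)
          ≤ ∑ y, wstep w v y * (1 / D) := by
            refine Finset.sum_le_sum fun y _ => ?_
            exact mul_le_mul_of_nonneg_left (ih ⟨m, hmlt⟩ h1 y a) (wstep_nonneg w hw0 v y)
        _ = 1 / D := by rw [← Finset.sum_mul, sum_wstep w v (hpos v), one_mul]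

lemma hit_two {D : ℝ} (hD : 0 < D) (hw0 : ∀ x y, 0 ≤ w x y) (hw1 : ∀ x y, w x y ≤ 1)
    (hdeg : ∀ v, D ≤ wdeg w v) :
    ∀ (k : ℕ) (i j : Fin (k+1)), 1 ≤ (i : ℕ) → (i : ℕ) < (j : ℕ) → ∀ (v a b : V),
      prFrom w v k (fun x => x i = a ∧ x j = b) ≤ 1 / D ^ 2 := by
  have hpos : ∀ v, wdeg w v ≠ 0 := fun v => ne_of_gt (lt_of_lt_of_le hD (hdeg v))
  intro k
  induction k with
  | zero =>
    intro i j hi hij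
    have := j.isLt
    omega
  | succ k ih =>
    intro i j hi hij v a b
    obtain ⟨m, hm⟩ : ∃ m : ℕ, (i : ℕ) = m + 1 := ⟨(i : ℕ) - 1, by omega⟩
    obtain ⟨l, hl⟩ : ∃ l : ℕ, (j : ℕ) = l + 1 := ⟨(j : ℕ) - 1, by omega⟩
    have hmlt : m < k + 1 := by have := i.isLt; omega
    have hllt : l < k + 1 := by have := j.isLt; omega
    have hml : m < l := by omega
    have hii : i = Fin.succ ⟨m, hmlt⟩ := by apply Fin.ext; simp [hm]
    have hjj : j = Fin.succ ⟨l, hllt⟩ := by apply Fin.ext; simp [hl]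
    rw [prFrom_succ]
    have hev : ∀ y : V, prFrom w y k (fun x => (Fin.cons (α := fun _ => V) v x) i = a ∧ (Fin.cons (α := fun _ => V) v x) j = b)
        = prFrom w y k (fun x => x ⟨m, hmlt⟩ = a ∧ x ⟨l, hllt⟩ = b) := by
      intro y
      refine prFrom_congr w fun x => ?_
      rw [hii, hjj, Fin.cons_succ, Fin.cons_succ]
    simp only [hev]
    by_cases hm0 : m = 0
    · subst hm0
      have hz : ∀ y : V, prFrom w y k (fun x => x ⟨0, hmlt⟩ = a ∧ x ⟨l, hllt⟩ = b)
          ≤ if y = a then 1 / D else 0 := by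
        intro y
        have h0 : (⟨0, hmlt⟩ : Fin (k+1)) = 0 := rfl
        rw [h0, prFrom_zero_and]
        by_cases hya : y = a
        · rw [if_pos hya, if_pos hya]
          exact hit_one w hD hw0 hw1 hdeg k ⟨l, hllt⟩ (by simp only [Fin.val_mk]; omega) y b
        · rw [if_neg hya, if_neg hya]
      calc ∑ y, wstep w v y * prFrom w y k (fun x => x ⟨0, hmlt⟩ = a ∧ x ⟨l, hllt⟩ = b)
          ≤ ∑ y, wstep w v y * (if y = a then 1 / D else 0) := by
            refine Finset.sum_le_sum fun y _ => ?_
            exact mul_le_mul_of_nonneg_left (hz y) (wstep_nonneg w hw0 v y)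
        _ = wstep w v a * (1 / D) := by
            simp only [mul_ite, mul_zero]
            rw [Finset.sum_ite_eq' Finset.univ a (fun y => wstep w v y * (1/D))]
            simp
        _ ≤ (1 / D) * (1 / D) := by
            refine mul_le_mul_of_nonneg_right (wstep_le w hD hw1 hdeg v a) ?_
            positivity
        _ = 1 / D ^ 2 := by rw [one_div_mul_one_div]; ring_nf
    · have h1 : 1 ≤ m := by omega
      calc ∑ y, wstep w v y * prFrom w y k (fun x => x ⟨m, hmlt⟩ = a ∧ x ⟨l, hllt⟩ = b)
          ≤ ∑ y, wstep w v y * (1 / D ^ 2) := by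
            refine Finset.sum_le_sum fun y _ => ?_
            exact mul_le_mul_of_nonneg_left (ih ⟨m, hmlt⟩ ⟨l, hllt⟩ h1 hml y a b)
              (wstep_nonneg w hw0 v y)
        _ = 1 / D ^ 2 := by rw [← Finset.sum_mul, sum_wstep w v (hpos v), one_mul]

lemma prStat_eq (k : ℕ) (P : (Fin (k+1) → V) → Prop) :
    prStat w k P = ∑ v, statDist w v * prFrom w v k P := by
  classical
  unfold prStat prFrom
  simp only [Finset.mul_sum, mul_ite, mul_zero]
  rw [Finset.sum_comm]
  refine Finset.sum_congr rfl fun x _ => ?_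
  have : ∀ v : V, (if x 0 = v ∧ P x then statDist w v * pathWeight w x else 0)
      = if x 0 = v then (if P x then statDist w v * pathWeight w x else 0) else 0 := by
    intro v
    by_cases h1 : x 0 = v <;> simp [h1]
  simp only [this]
  rw [Finset.sum_ite_eq]
  simp

lemma prFrom_exists_le {ι : Type*} [Fintype ι] (hw0 : ∀ x y, 0 ≤ w x y) (v : V) (k : ℕ)
    (P : ι → (Fin (k+1) → V) → Prop) :
    prFrom w v k (fun x => ∃ t, P t x) ≤ ∑ t, prFrom w v k (P t) := by
  classical
  unfold prFrom
  rw [Finset.sum_comm]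
  refine Finset.sum_le_sum fun x _ => ?_
  by_cases h : x 0 = v ∧ ∃ t, P t x
  · obtain ⟨h0, t0, ht0⟩ := h
    rw [if_pos ⟨h0, t0, ht0⟩]
    calc pathWeight w x = (if x 0 = v ∧ P t0 x then pathWeight w x else 0) := by
          rw [if_pos ⟨h0, ht0⟩]
      _ ≤ ∑ t, if x 0 = v ∧ P t x then pathWeight w x else 0 := by
          have key : ∀ t : ι, t ∈ Finset.univ →
              (0:ℝ) ≤ if x 0 = v ∧ P t x then pathWeight w x else 0 := by
            intro t _
            split_ifs
            · exact pathWeight_nonneg w hw0 x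
            · exact le_refl 0
          exact Finset.single_le_sum key (Finset.mem_univ t0)
  · rw [if_neg h]
    refine Finset.sum_nonneg fun t _ => ?_
    split_ifs
    · exact pathWeight_nonneg w hw0 x
    · exact le_refl 0

lemma statDist_nonneg (hw0 : ∀ x y, 0 ≤ w x y) (v : V) : 0 ≤ statDist w v :=
  div_nonneg (wdeg_nonneg w hw0 v) (Finset.sum_nonneg fun u _ => wdeg_nonneg w hw0 u)

lemma prStat_exists_le {ι : Type*} [Fintype ι] (hw0 : ∀ x y, 0 ≤ w x y) (k : ℕ)
    (P : ι → (Fin (k+1) → V) → Prop) :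
    prStat w k (fun x => ∃ t, P t x) ≤ ∑ t, prStat w k (P t) := by
  classical
  rw [prStat_eq]
  calc ∑ v, statDist w v * prFrom w v k (fun x => ∃ t, P t x)
      ≤ ∑ v, statDist w v * ∑ t, prFrom w v k (P t) := by
        refine Finset.sum_le_sum fun v _ => ?_
        exact mul_le_mul_of_nonneg_left (prFrom_exists_le w hw0 v k P) (statDist_nonneg w hw0 v)
    _ = ∑ t, ∑ v, statDist w v * prFrom w v k (P t) := by
        simp only [Finset.mul_sum]
        rw [Finset.sum_comm]
    _ = ∑ t, prStat w k (P t) := by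
        refine Finset.sum_congr rfl fun t _ => (prStat_eq w k (P t)).symm

lemma statHit_two {D : ℝ} (hD : 0 < D) (hw0 : ∀ x y, 0 ≤ w x y) (hw1 : ∀ x y, w x y ≤ 1)
    (hdeg : ∀ v, D ≤ wdeg w v) (hπsum : ∑ v, statDist w v = 1)
    (hπle : ∀ v, statDist w v ≤ 1 / D)
    (k : ℕ) (i j : Fin (k+1)) (hij : i ≠ j) (a b : V) :
    prStat w k (fun x => x i = a ∧ x j = b) ≤ 1 / D ^ 2 := by
  classical
  have hπ0 := statDist_nonneg w hw0
  have hzero : ∀ (c d : V) (l : Fin (k+1)), 1 ≤ (l:ℕ) →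
      ∑ v, statDist w v * prFrom w v k (fun x => x 0 = c ∧ x l = d) ≤ 1 / D ^ 2 := by
    intro c d l hl
    calc ∑ v, statDist w v * prFrom w v k (fun x => x 0 = c ∧ x l = d)
        ≤ ∑ v, statDist w v * (if v = c then 1 / D else 0) := by
          refine Finset.sum_le_sum fun v _ => ?_
          refine mul_le_mul_of_nonneg_left ?_ (hπ0 v)
          rw [prFrom_zero_and]
          by_cases hvc : v = c
          · rw [if_pos hvc, if_pos hvc]
            exact hit_one w hD hw0 hw1 hdeg k l hl v d
          · rw [if_neg hvc, if_neg hvc]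
      _ = statDist w c * (1 / D) := by
          simp only [mul_ite, mul_zero]
          rw [Finset.sum_ite_eq' Finset.univ c (fun v => statDist w v * (1/D))]
          simp
      _ ≤ (1 / D) * (1 / D) := by
          refine mul_le_mul_of_nonneg_right (hπle c) ?_
          positivity
      _ = 1 / D ^ 2 := by rw [one_div_mul_one_div]; ring_nf
  have hboth : ∀ (c d : V) (l l' : Fin (k+1)), 1 ≤ (l:ℕ) → (l:ℕ) < (l':ℕ) →
      ∑ v, statDist w v * prFrom w v k (fun x => x l = c ∧ x l' = d) ≤ 1 / D ^ 2 := by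
    intro c d l l' hl hll'
    calc ∑ v, statDist w v * prFrom w v k (fun x => x l = c ∧ x l' = d)
        ≤ ∑ v, statDist w v * (1 / D ^ 2) := by
          refine Finset.sum_le_sum fun v _ => ?_
          exact mul_le_mul_of_nonneg_left (hit_two w hD hw0 hw1 hdeg k l l' hl hll' v c d) (hπ0 v)
      _ = 1 / D ^ 2 := by rw [← Finset.sum_mul, hπsum, one_mul]
  rw [prStat_eq]
  by_cases hi0 : (i : ℕ) = 0
  · have hi : i = 0 := Fin.ext hi0
    have hj : 1 ≤ (j : ℕ) := by
      rcases Nat.eq_zero_or_pos (j : ℕ) with h | h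
      · exact absurd (Fin.ext (hi0.trans h.symm) : i = j) hij
      · exact h
    subst hi
    exact hzero a b j hj
  · by_cases hj0 : (j : ℕ) = 0
    · have hj : j = 0 := Fin.ext hj0
      subst hj
      have hcomm : ∀ v, prFrom w v k (fun x => x i = a ∧ x 0 = b)
          = prFrom w v k (fun x => x 0 = b ∧ x i = a) :=
        fun v => prFrom_congr w fun x => and_comm
      simp only [hcomm]
      exact hzero b a i (by omega)
    · rcases lt_or_gt_of_ne (fun h => hij (Fin.ext h) : (i:ℕ) ≠ (j:ℕ)) with h | h
      · exact hboth a b i j (by omega) h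
      · have hcomm : ∀ v, prFrom w v k (fun x => x i = a ∧ x j = b)
            = prFrom w v k (fun x => x j = b ∧ x i = a) :=
          fun v => prFrom_congr w fun x => and_comm
        simp only [hcomm]
        exact hboth b a j i (by omega) h

lemma count_eq (k : ℕ) (U W : Finset V) (c : ℝ) :
    (∑ t : (Fin (k+1) × Fin (k+1)) × V × V,
      if t.1.1 ≠ t.1.2 ∧ t.2.1 ∈ U ∧ t.2.2 ∈ W then c else 0)
    = ((k:ℝ)+1) * k * U.card * W.card * c := by
  classical
  have hsplit : ∀ t : (Fin (k+1) × Fin (k+1)) × V × V,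
      (if t.1.1 ≠ t.1.2 ∧ t.2.1 ∈ U ∧ t.2.2 ∈ W then c else 0)
      = (if t.1.1 ≠ t.1.2 then (if t.2.1 ∈ U then (if t.2.2 ∈ W then c else 0) else 0) else 0) := by
    intro t
    by_cases h1 : t.1.1 ≠ t.1.2 <;> by_cases h2 : t.2.1 ∈ U <;> by_cases h3 : t.2.2 ∈ W <;>
      simp [h1, h2, h3]
  simp only [hsplit]
  rw [Fintype.sum_prod_type]
  have hinner : ∀ p : Fin (k+1) × Fin (k+1),
      (∑ q : V × V, if p.1 ≠ p.2 then (if q.1 ∈ U then (if q.2 ∈ W then c else 0) else 0) else 0)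
      = if p.1 ≠ p.2 then (U.card : ℝ) * W.card * c else 0 := by
    intro p
    by_cases h : p.1 ≠ p.2
    · simp only [if_pos h]
      rw [Fintype.sum_prod_type]
      have hb : (∑ b : V, if b ∈ W then c else 0) = (W.card : ℝ) * c := by
        rw [Finset.sum_ite_mem, Finset.univ_inter, Finset.sum_const, nsmul_eq_mul]
      have ha : ∀ a : V, (∑ b : V, if a ∈ U then (if b ∈ W then c else 0) else 0)
          = if a ∈ U then (W.card : ℝ) * c else 0 := by
        intro a
        by_cases h2 : a ∈ U <;> simp [h2, hb]
      simp only [ha]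
      rw [Finset.sum_ite_mem, Finset.univ_inter, Finset.sum_const, nsmul_eq_mul]
      ring
    · simp [h]
  simp only [hinner]
  rw [Fintype.sum_prod_type]
  have hj : ∀ i : Fin (k+1),
      (∑ j : Fin (k+1), if i ≠ j then (U.card : ℝ) * W.card * c else 0)
      = (k : ℝ) * ((U.card : ℝ) * W.card * c) := by
    intro i
    have hsub : ∀ j : Fin (k+1), (if i ≠ j then (U.card : ℝ) * W.card * c else 0)
        = (U.card : ℝ) * W.card * c - (if i = j then (U.card : ℝ) * W.card * c else 0) := by
      intro j
      by_cases h : i = j <;> simp [h]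
    simp only [hsub]
    rw [Finset.sum_sub_distrib, Finset.sum_const, Finset.sum_ite_eq, Finset.card_univ]
    simp only [Fintype.card_fin, Finset.mem_univ, if_pos, nsmul_eq_mul]
    push_cast
    ring
  simp only [hj]
  rw [Finset.sum_const, Finset.card_univ]
  simp only [Fintype.card_fin, nsmul_eq_mul]
  push_cast
  ring

lemma prStat_mono (hw0 : ∀ x y, 0 ≤ w x y) {k : ℕ} {P Q : (Fin (k+1) → V) → Prop}
    (h : ∀ x, P x → Q x) : prStat w k P ≤ prStat w k Q := by
  classical
  refine Finset.sum_le_sum fun x _ => ?_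
  have h0 : 0 ≤ statDist w (x 0) * pathWeight w x :=
    mul_nonneg (statDist_nonneg w hw0 (x 0)) (pathWeight_nonneg w hw0 x)
  split_ifs with h1 h2
  · exact le_refl _
  · exact absurd (h x h1) h2
  · exact h0
  · exact le_refl _

lemma prStat_congr {k : ℕ} {P Q : (Fin (k+1) → V) → Prop}
    (h : ∀ x, P x ↔ Q x) : prStat w k P = prStat w k Q := by
  classical
  refine Finset.sum_congr rfl fun x _ => ite_congr ?_ (fun _ => rfl) (fun _ => rfl)
  rw [eq_iff_iff]; exact h x

lemma prStat_eq_zero {k : ℕ} {P : (Fin (k+1) → V) → Prop}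
    (h : ∀ x, ¬ P x) : prStat w k P = 0 :=
  Finset.sum_eq_zero fun x _ => if_neg (h x)

end Aux

/-- Closeness bound: for a connected weighted graph on `n` vertices with
minimal degree at least `δn`, disjoint `U, W ⊆ V` and `k ≥ 1`:
`sup_{v ∉ U∪W} P_v(τ_U < k ∧ τ_W < k) ≤ 2k²|U||W|/(δ²n²)`, and in particular
`Close_k(U,W) = P_π(τ_U < k ∧ τ_W < k) ≤ 2k²|U||W|/(δ²n²)`. -/
theorem closeness_bound {V : Type*} [Fintype V] [DecidableEq V] (w : V → V → ℝ) (δ : ℝ)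
    (hδ : 0 < δ) (hW : IsWeightedGraph w) (hconn : ConnectedGraph w)
    (hdeg : ∀ v, δ * (Fintype.card V : ℝ) ≤ wdeg w v)
    (U W : Finset V) (hUW : Disjoint U W) (k : ℕ) (hk : 1 ≤ k) :
    (∀ v, v ∉ U ∪ W →
      prFrom w v k (fun x => (∃ i : Fin (k + 1), (i : ℕ) < k ∧ x i ∈ U) ∧ (∃ i : Fin (k + 1), (i : ℕ) < k ∧ x i ∈ W)) ≤
        2 * (k : ℝ) ^ 2 * U.card * W.card / (δ ^ 2 * (Fintype.card V : ℝ) ^ 2)) ∧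
    prStat w k (fun x => (∃ i : Fin (k + 1), (i : ℕ) < k ∧ x i ∈ U) ∧ (∃ i : Fin (k + 1), (i : ℕ) < k ∧ x i ∈ W)) ≤
      2 * (k : ℝ) ^ 2 * U.card * W.card / (δ ^ 2 * (Fintype.card V : ℝ) ^ 2) := by
  classical
  obtain ⟨hsym, hw01, hloop⟩ := hW
  have hw0 : ∀ x y, 0 ≤ w x y := fun x y => (hw01 x y).1
  have hw1 : ∀ x y, w x y ≤ 1 := fun x y => (hw01 x y).2
  have hne : Nonempty V := hconn.nonempty
  have hncard : 0 < Fintype.card V := Fintype.card_pos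
  have hn0 : (0:ℝ) < (Fintype.card V : ℝ) := by exact_mod_cast hncard
  set n : ℝ := (Fintype.card V : ℝ) with hn
  set D : ℝ := δ * n with hDdef
  have hD : 0 < D := mul_pos hδ hn0
  have hdegD : ∀ v, D ≤ wdeg w v := hdeg
  have hpos : ∀ v, wdeg w v ≠ 0 := fun v => ne_of_gt (lt_of_lt_of_le hD (hdegD v))
  -- stationary distribution facts
  have hwle : ∀ v, wdeg w v ≤ n := by
    intro v
    calc wdeg w v = ∑ u, w v u := rfl
      _ ≤ ∑ _u : V, (1:ℝ) := Finset.sum_le_sum fun u _ => hw1 v u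
      _ = n := by rw [Finset.sum_const, Finset.card_univ, nsmul_eq_mul, mul_one]
  have hS : n * D ≤ ∑ u, wdeg w u := by
    calc n * D = ∑ _u : V, D := by rw [Finset.sum_const, Finset.card_univ, nsmul_eq_mul]
      _ ≤ ∑ u, wdeg w u := Finset.sum_le_sum fun u _ => hdegD u
  have hSpos : 0 < ∑ u, wdeg w u := lt_of_lt_of_le (mul_pos hn0 hD) hS
  have hπsum : ∑ v, statDist w v = 1 := by
    unfold statDist
    rw [← Finset.sum_div]
    exact div_self (ne_of_gt hSpos)
  have hπle : ∀ v, statDist w v ≤ 1 / D := by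
    intro v
    unfold statDist
    rw [div_le_div_iff₀ hSpos hD]
    calc wdeg w v * D ≤ n * D := mul_le_mul_of_nonneg_right (hwle v) hD.le
      _ ≤ 1 * ∑ u, wdeg w u := by rw [one_mul]; exact hS
  -- the decomposition
  set ι := (Fin (k+1) × Fin (k+1)) × V × V with hι
  set Pt : ι → (Fin (k+1) → V) → Prop := fun t x =>
    t.1.1 ≠ t.1.2 ∧ t.2.1 ∈ U ∧ t.2.2 ∈ W ∧ x t.1.1 = t.2.1 ∧ x t.1.2 = t.2.2 with hPt
  have hE : ∀ x : Fin (k+1) → V,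
      ((∃ i : Fin (k+1), (i : ℕ) < k ∧ x i ∈ U) ∧ (∃ i : Fin (k+1), (i : ℕ) < k ∧ x i ∈ W)) →
      ∃ t : ι, Pt t x := by
    rintro x ⟨⟨i, hik, hiU⟩, ⟨j, hjk, hjW⟩⟩
    refine ⟨((i, j), (x i, x j)), ?_, hiU, hjW, rfl, rfl⟩
    intro hij
    have hij' : i = j := hij
    exact Finset.disjoint_left.mp hUW hiU (hij' ▸ hjW)
  have hcondsplit : ∀ t : ι, (∀ x, ¬ Pt t x) ∨
      (t.1.1 ≠ t.1.2 ∧ t.2.1 ∈ U ∧ t.2.2 ∈ W) := by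
    intro t
    by_cases hcond : t.1.1 ≠ t.1.2 ∧ t.2.1 ∈ U ∧ t.2.2 ∈ W
    · exact Or.inr hcond
    · exact Or.inl fun x hx => hcond ⟨hx.1, hx.2.1, hx.2.2.1⟩
  -- arithmetic at the end
  have harith : ((k:ℝ)+1) * k * U.card * W.card * (1 / D ^ 2) ≤
      2 * (k : ℝ) ^ 2 * U.card * W.card / (δ ^ 2 * n ^ 2) := by
    have hD2 : D ^ 2 = δ ^ 2 * n ^ 2 := mul_pow δ n 2
    have hk1 : (1:ℝ) ≤ (k:ℝ) := by exact_mod_cast hk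
    have hU0 : (0:ℝ) ≤ U.card := Nat.cast_nonneg _
    have hW0 : (0:ℝ) ≤ W.card := Nat.cast_nonneg _
    rw [mul_one_div, hD2, div_le_div_iff₀ (by positivity) (by positivity)]
    have hkey : ((k:ℝ)+1) * k * U.card * W.card ≤ 2 * (k : ℝ) ^ 2 * U.card * W.card := by
      have h2k : (k:ℝ) + 1 ≤ 2 * k := by linarith
      have := mul_le_mul_of_nonneg_right (mul_le_mul_of_nonneg_right
        (mul_le_mul_of_nonneg_right h2k (by linarith : (0:ℝ) ≤ (k:ℝ))) hU0) hW0
      calc ((k:ℝ)+1) * k * U.card * W.card ≤ 2 * k * k * U.card * W.card := this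
        _ = 2 * (k : ℝ) ^ 2 * U.card * W.card := by ring
    nlinarith [sq_nonneg (δ * n), mul_pos (mul_pos hδ hδ) (mul_pos hn0 hn0),
      mul_le_mul_of_nonneg_right hkey (le_of_lt (by positivity : (0:ℝ) < δ ^ 2 * n ^ 2))]
  constructor
  · -- pointwise bound
    intro v hv
    have hfrom : ∀ t : ι, prFrom w v k (Pt t) ≤
        (if t.1.1 ≠ t.1.2 ∧ t.2.1 ∈ U ∧ t.2.2 ∈ W then 1 / D ^ 2 else 0) := by
      intro t
      rcases hcondsplit t with hnone | hcond
      · rw [prFrom_eq_zero w hnone]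
        split_ifs
        · positivity
        · exact le_refl 0
      · rw [if_pos hcond]
        obtain ⟨⟨i, j⟩, a, b⟩ := t
        obtain ⟨hij, haU, hbW⟩ := hcond
        have hPt2 : prFrom w v k (Pt ((i, j), a, b)) =
            prFrom w v k (fun x => x i = a ∧ x j = b) := by
          refine prFrom_congr w fun x => ?_
          simp only [hPt]
          constructor
          · rintro ⟨-, -, -, h4, h5⟩; exact ⟨h4, h5⟩
          · rintro ⟨h4, h5⟩; exact ⟨hij, haU, hbW, h4, h5⟩
        rw [hPt2]
        by_cases hi0 : (i : ℕ) = 0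
        · have hi : i = 0 := Fin.ext hi0
          subst hi
          rw [prFrom_zero_and]
          have hva : v ≠ a := fun h => hv (Finset.mem_union_left _ (h ▸ haU))
          rw [if_neg hva]
          positivity
        · by_cases hj0 : (j : ℕ) = 0
          · have hj : j = 0 := Fin.ext hj0
            subst hj
            rw [prFrom_congr w (fun x => and_comm), prFrom_zero_and]
            have hvb : v ≠ b := fun h => hv (Finset.mem_union_right _ (h ▸ hbW))
            rw [if_neg hvb]
            positivity
          · have hijv : (i:ℕ) ≠ (j:ℕ) := fun h => hij (Fin.ext h)
            rcases lt_or_gt_of_ne hijv with h | h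
            · exact hit_two w hD hw0 hw1 hdegD k i j (by omega) h v a b
            · rw [prFrom_congr w (fun x => and_comm)]
              exact hit_two w hD hw0 hw1 hdegD k j i (by omega) h v b a
    calc prFrom w v k (fun x => (∃ i : Fin (k + 1), (i : ℕ) < k ∧ x i ∈ U) ∧ (∃ i : Fin (k + 1), (i : ℕ) < k ∧ x i ∈ W))
        ≤ prFrom w v k (fun x => ∃ t : ι, Pt t x) := prFrom_mono w hw0 hE
      _ ≤ ∑ t : ι, prFrom w v k (Pt t) := prFrom_exists_le w hw0 v k Pt
      _ ≤ ∑ t : ι, (if t.1.1 ≠ t.1.2 ∧ t.2.1 ∈ U ∧ t.2.2 ∈ W then 1 / D ^ 2 else 0) :=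
          Finset.sum_le_sum fun t _ => hfrom t
      _ = ((k:ℝ)+1) * k * U.card * W.card * (1 / D ^ 2) := count_eq k U W (1 / D ^ 2)
      _ ≤ 2 * (k : ℝ) ^ 2 * U.card * W.card / (δ ^ 2 * n ^ 2) := harith
  · -- stationary bound
    have hstat : ∀ t : ι, prStat w k (Pt t) ≤
        (if t.1.1 ≠ t.1.2 ∧ t.2.1 ∈ U ∧ t.2.2 ∈ W then 1 / D ^ 2 else 0) := by
      intro t
      rcases hcondsplit t with hnone | hcond
      · rw [prStat_eq_zero w hnone]
        split_ifs
        · positivity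
        · exact le_refl 0
      · rw [if_pos hcond]
        obtain ⟨⟨i, j⟩, a, b⟩ := t
        obtain ⟨hij, haU, hbW⟩ := hcond
        have hPt2 : prStat w k (Pt ((i, j), a, b)) =
            prStat w k (fun x => x i = a ∧ x j = b) := by
          refine prStat_congr w fun x => ?_
          simp only [hPt]
          constructor
          · rintro ⟨-, -, -, h4, h5⟩; exact ⟨h4, h5⟩
          · rintro ⟨h4, h5⟩; exact ⟨hij, haU, hbW, h4, h5⟩
        rw [hPt2]
        exact statHit_two w hD hw0 hw1 hdegD hπsum hπle k i j hij a b
    calc prStat w k (fun x => (∃ i : Fin (k + 1), (i : ℕ) < k ∧ x i ∈ U) ∧ (∃ i : Fin (k + 1), (i : ℕ) < k ∧ x i ∈ W))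
        ≤ prStat w k (fun x => ∃ t : ι, Pt t x) := prStat_mono w hw0 hE
      _ ≤ ∑ t : ι, prStat w k (Pt t) := prStat_exists_le w hw0 k Pt
      _ ≤ ∑ t : ι, (if t.1.1 ≠ t.1.2 ∧ t.2.1 ∈ U ∧ t.2.2 ∈ W then 1 / D ^ 2 else 0) :=
          Finset.sum_le_sum fun t _ => hstat t
      _ = ((k:ℝ)+1) * k * U.card * W.card * (1 / D ^ 2) := count_eq k U W (1 / D ^ 2)
      _ ≤ 2 * (k : ℝ) ^ 2 * U.card * W.card / (δ ^ 2 * n ^ 2) := harith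


end
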